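/- In a topological vector space Y, every sequentially complete bounded convex set B is σ-convex: every convex series ∑ λₙ bₙ with bₙ ∈ B, λₙ ≥ 0, ∑ λₙ = 1, converges to a point of B. -/

import Mathlib

open Filter Topology Pointwise

/-- A set is σ-convex if every convex series of its points converges to a point of it. -/
def SigmaConvex {Y : Type*} [AddCommGroup Y] [Module ℝ Y] [TopologicalSpace Y]
    (B : Set Y) : Prop :=
  ∀ (b : ℕ → Y) (l : ℕ → ℝ), (∀ n, b n ∈ B) → (∀ n, 0 ≤ l n) →
    Tendsto (fun N => ∑ n ∈ Finset.range N, l n) atTop (nhds 1) →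
    ∃ p ∈ B, Tendsto (fun N => ∑ n ∈ Finset.range N, l n • b n) atTop (nhds p)

theorem seqComplete_bounded_convex_is_sigmaConvex {Y : Type*} [AddCommGroup Y]
    [Module ℝ Y] [UniformSpace Y] [IsUniformAddGroup Y] [ContinuousSMul ℝ Y]
    (B : Set Y) (hBconv : Convex ℝ B)
    (hBbdd : Bornology.IsVonNBounded ℝ B)
    (hBsc : ∀ seq : ℕ → Y, (∀ n, seq n ∈ B) → CauchySeq seq →
      ∃ b ∈ B, Tendsto seq atTop (nhds b)) :
    SigmaConvex B := by
  intro b l hb hl tlim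
  set t : ℕ → ℝ := fun N => ∑ n ∈ Finset.range N, l n with ht
  have htmono : Monotone t := by
    intro m n hmn
    exact Finset.sum_le_sum_of_subset_of_nonneg (Finset.range_subset_range.2 hmn)
      (fun i _ _ => hl i)
  have ht1 : ∀ n, t n ≤ 1 := htmono.ge_of_tendsto tlim
  set c : Y := b 0 with hc
  set S : ℕ → Y := fun N => ∑ n ∈ Finset.range N, l n • b n with hS
  set q : ℕ → Y := fun N => S N + (1 - t N) • c with hq
  -- each q N is a convex combination of points of B
  have hqB : ∀ N, q N ∈ B := by
    intro N
    have : (∑ k ∈ Finset.range (N + 1),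
        (if k = N then (1 - t N) else l k) • (if k = N then c else b k)) ∈ B := by
      apply hBconv.sum_mem
      · intro k _
        by_cases h : k = N
        · simp [h, sub_nonneg.2 (ht1 N)]
        · simp [h, hl k]
      · rw [Finset.sum_range_succ]
        simp only [if_pos rfl]
        rw [Finset.sum_congr rfl (fun k hk => by
          rw [if_neg (Finset.mem_range.1 hk).ne])]
        ring_nf
        simp [ht]
      · intro k _
        by_cases h : k = N
        · simp [h, hc, hb 0]
        · simp [h, hb k]
    rw [Finset.sum_range_succ] at this
    simp only [if_pos rfl] at this
    rwa [Finset.sum_congr rfl (fun k hk => by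
      rw [if_neg (Finset.mem_range.1 hk).ne, if_neg (Finset.mem_range.1 hk).ne])] at this
  -- difference formula
  have hdiff : ∀ m n, m ≤ n →
      q n - q m = (∑ k ∈ Finset.Ico m n, l k • b k) - (t n - t m) • c := by
    intro m n hmn
    have h : (∑ k ∈ Finset.range m, l k • b k) + (∑ k ∈ Finset.Ico m n, l k • b k)
        = ∑ k ∈ Finset.range n, l k • b k := Finset.sum_range_add_sum_Ico _ hmn
    have h2 : (∑ k ∈ Finset.range m, l k) + (∑ k ∈ Finset.Ico m n, l k)
        = ∑ k ∈ Finset.range n, l k := Finset.sum_range_add_sum_Ico _ hmn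
    simp only [hq, hS, ht]
    rw [← h, ← h2]
    module
  -- tail sums lie in scaled difference set
  have hkey : ∀ m n, m ≤ n → q n - q m = 0 ∨
      (0 < t n - t m ∧ q n - q m ∈ (t n - t m) • (B - B)) := by
    intro m n hmn
    rcases eq_or_lt_of_le (htmono hmn) with h | h
    · left
      have hzero : ∀ k ∈ Finset.Ico m n, l k = 0 := by
        have hsum0 : ∑ k ∈ Finset.Ico m n, l k = 0 := by
          have := Finset.sum_range_add_sum_Ico l hmn
          change t m + _ = t n at this
          linarith [this]
        exact (Finset.sum_eq_zero_iff_of_nonneg (fun k _ => hl k)).1 hsum0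
      rw [hdiff m n hmn, ← h]
      rw [Finset.sum_congr rfl (fun k hk => by rw [hzero k hk, zero_smul])]
      simp
    · right
      refine ⟨by linarith, ?_⟩
      set s : ℝ := t n - t m with hs
      have hspos : 0 < s := by linarith
      have hsum_s : ∑ k ∈ Finset.Ico m n, l k = s := by
        have := Finset.sum_range_add_sum_Ico l hmn
        change t m + _ = t n at this
        linarith [this]
      have hx : (∑ k ∈ Finset.Ico m n, (l k / s) • b k) ∈ B := by
        apply hBconv.sum_mem
        · intro k _; exact div_nonneg (hl k) hspos.le
        · rw [← Finset.sum_div, hsum_s, div_self hspos.ne']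
        · intro k _; exact hb k
      have hxc : (∑ k ∈ Finset.Ico m n, (l k / s) • b k) - c ∈ B - B :=
        Set.sub_mem_sub hx (hb 0)
      have heq : q n - q m = s • ((∑ k ∈ Finset.Ico m n, (l k / s) • b k) - c) := by
        rw [hdiff m n hmn, smul_sub, Finset.smul_sum]
        congr 1
        refine Finset.sum_congr rfl (fun k _ => ?_)
        rw [smul_smul, mul_div_cancel₀ _ hspos.ne']
      rw [heq]
      exact Set.smul_mem_smul_set hxc
  -- q is a Cauchy sequence
  have hcauchy : CauchySeq q := by
    rw [cauchySeq_iff_tendsto, uniformity_eq_comap_nhds_zero Y, tendsto_comap_iff]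
    rw [tendsto_def]
    intro W hW
    -- symmetric neighborhood
    set W₀ : Set Y := W ∩ (-W) with hW₀def
    have hW₀ : W₀ ∈ 𝓝 (0 : Y) := by
      apply Filter.inter_mem hW
      have : Tendsto (fun y : Y => -y) (𝓝 0) (𝓝 (0 : Y)) := by
        simpa using (continuous_neg (G := Y)).tendsto (0 : Y)
      exact this hW
    -- absorption
    obtain ⟨r, hr⟩ := absorbs_iff_norm.1 ((hBbdd.sub hBbdd) hW₀)
    set r' : ℝ := max r 1 with hr'
    have hr'pos : 0 < r' := lt_of_lt_of_le one_pos (le_max_right r 1)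
    set ε : ℝ := 1 / r' with hε
    have hεpos : 0 < ε := by positivity
    have habs : ∀ s : ℝ, 0 < s → s ≤ ε → s • (B - B) ⊆ W₀ := by
      intro s hs hsε
      have hinv : r ≤ ‖s⁻¹‖ := by
        rw [Real.norm_eq_abs, abs_of_pos (inv_pos.2 hs)]
        have : r' ≤ s⁻¹ := by
          rw [le_inv_comm₀ hr'pos hs]
          simpa [hε, one_div] using hsε
        exact le_trans (le_max_left r 1) this
      have hsub : B - B ⊆ s⁻¹ • W₀ := hr s⁻¹ hinv
      calc s • (B - B) ⊆ s • (s⁻¹ • W₀) := Set.smul_set_mono hsub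
        _ = W₀ := by rw [smul_smul, mul_inv_cancel₀ hs.ne', one_smul]
    -- pick N with 1 - t k < ε for k ≥ N
    have : ∀ᶠ k in atTop, 1 - t k < ε := by
      have : Tendsto (fun k => 1 - t k) atTop (𝓝 (1 - 1)) :=
        tendsto_const_nhds.sub tlim
      rw [sub_self] at this
      exact (this.eventually (eventually_lt_nhds hεpos))
    obtain ⟨N, hN⟩ := eventually_atTop.1 this
    refine eventually_atTop.2 ⟨(N, N), fun p hp => ?_⟩
    obtain ⟨hp1, hp2⟩ := hp
    have key : ∀ m n : ℕ, N ≤ m → m ≤ n → q n - q m ∈ W₀ := by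
      intro m n hNm hmn
      rcases hkey m n hmn with h | ⟨hpos, hmem⟩
      · rw [h]; exact mem_of_mem_nhds hW₀
      · apply habs (t n - t m) hpos _ hmem
        have := hN m hNm
        have := ht1 n
        linarith
    show q p.2 - q p.1 ∈ W
    rcases le_total p.1 p.2 with h | h
    · exact (key p.1 p.2 hp1 h).1
    · have := (key p.2 p.1 hp2 h).2
      simpa using this
  obtain ⟨p, hpB, hplim⟩ := hBsc q hqB hcauchy
  refine ⟨p, hpB, ?_⟩
  have hSeq : ∀ N, S N = q N - (1 - t N) • c := fun N =>
    (add_sub_cancel_right (S N) ((1 - t N) • c)).symm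
  have h0 : Tendsto (fun N => (1 - t N) • c) atTop (𝓝 (0 : Y)) := by
    have h1 : Tendsto (fun N => 1 - t N) atTop (𝓝 (0 : ℝ)) := by
      have h2 : Tendsto (fun N => (1 : ℝ) - t N) atTop (𝓝 (1 - 1)) :=
        tendsto_const_nhds.sub tlim
      simpa using h2
    have := h1.smul_const c
    rwa [zero_smul] at this
  have := hplim.sub h0
  rw [sub_zero] at this
  simpa [← hSeq] using this
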